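/- arXiv:1004.3131 — 2 statements merged into one kernel-verified Lean document; each statement's English description precedes it below -/
import Mathlib

section
/- Let $0=v_0<v_1<\dots$, $J_t=\max\{k:v_k\leq t\}$, and let $x:[0,\infty)\to[0,\infty)$ be right-continuous with left limits and satisfy $x_s\leq A+\sum_{k=1}^{J_s} c_k\,x_{v_k-}+g\int_0^s x_u\,du$ for all $s\leq t$, where $A,g\geq0$ and $c_k\geq0$. Then $\sup_{s\leq t}x_s\leq A\,e^{gt}\prod_{k=1}^{J_t}(1+c_k)\leq A\,e^{gt}\,e^{\sum_{k=1}^{J_t}c_k}$. -/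
open Filter Set MeasureTheory
open Topology

lemma gronwall_int (f : ℝ → ℝ) (hIntAll : ∀ p q, IntervalIntegrable f volume p q)
    (a b D g : ℝ) (hg : 0 ≤ g)
    (hrc : ∀ w, a ≤ w → ContinuousWithinAt f (Ici w) w)
    (prem : ∀ u ∈ Icc a b, f u ≤ D + g * ∫ w in a..u, f w) :
    ∀ u ∈ Icc a b, f u ≤ D * Real.exp (g * (u - a)) := by
  set F : ℝ → ℝ := fun u => ∫ w in a..u, f w with hF
  have hFc : Continuous F := intervalIntegral.continuous_primitive hIntAll a
  have hmeas : ∀ w : ℝ, StronglyMeasurableAtFilter f (𝓝[>] w) volume := by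
    intro w
    refine ⟨Ioc w (w + 1), Ioc_mem_nhdsGT_of_mem ⟨le_refl w, by linarith⟩, ?_⟩
    have h1 : IntegrableOn f (Ioc w (w + 1)) volume := by
      have := (hIntAll w (w + 1)).1
      simpa using this
    exact h1.aestronglyMeasurable
  have hF' : ∀ w, a ≤ w → HasDerivWithinAt F (f w) (Ici w) w := fun w hw =>
    intervalIntegral.integral_hasDerivWithinAt_right (hIntAll a w) (hmeas w)
      ((hrc w hw).mono (Ioi_subset_Ici le_rfl))
  set ψ : ℝ → ℝ := fun u => (D + g * F u) * Real.exp (-(g * (u - a))) with hψ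
  have hψcont : Continuous ψ := by
    apply Continuous.mul
    · exact continuous_const.add (continuous_const.mul hFc)
    · exact Real.continuous_exp.comp (by continuity)
  have hψ' : ∀ w ∈ Ico a b, HasDerivWithinAt ψ
      (g * Real.exp (-(g * (w - a))) * (f w - (D + g * F w))) (Ici w) w := by
    intro w hw
    have h1 : HasDerivWithinAt (fun u => D + g * F u) (g * f w) (Ici w) w :=
      ((hF' w hw.1).const_mul g).const_add D
    have h2' : HasDerivAt (fun u : ℝ => Real.exp (-(g * (u - a))))
        (Real.exp (-(g * (w - a))) * (-g)) w := by
      have hlin : HasDerivAt (fun u : ℝ => -(g * (u - a))) (-g) w := by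
        exact (by simpa using (((hasDerivAt_id w).sub_const a).const_mul g).neg :
          HasDerivAt (-fun y => g * (y - a)) (-g) w)
      exact (Real.hasDerivAt_exp _).comp w hlin
    have := h1.mul (h2'.hasDerivWithinAt)
    refine this.congr_deriv ?_
    ring
  have key : ∀ u ∈ Icc a b, ψ u ≤ D := by
    intro u hu
    have ha : ψ a ≤ D := by
      simp [hψ, hF, intervalIntegral.integral_same]
    have := image_le_of_deriv_right_le_deriv_boundary (f := ψ)
      (f' := fun w => g * Real.exp (-(g * (w - a))) * (f w - (D + g * F w)))
      (B := fun _ => D) (B' := fun _ => 0)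
      hψcont.continuousOn hψ' ha continuousOn_const
      (fun w _ => (hasDerivWithinAt_const w _ D))
      (fun w hw => by
        have hfw : f w ≤ D + g * F w := prem w ⟨hw.1, hw.2.le⟩
        have hE : (0:ℝ) ≤ g * Real.exp (-(g * (w - a))) :=
          mul_nonneg hg (Real.exp_pos _).le
        exact mul_nonpos_of_nonneg_of_nonpos hE (by linarith))
    exact this hu
  intro u hu
  have hψu := key u hu
  have hEpos : (0:ℝ) < Real.exp (g * (u - a)) := Real.exp_pos _
  have hEinv : Real.exp (-(g * (u - a))) = (Real.exp (g * (u - a)))⁻¹ := Real.exp_neg _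
  have h3 : D + g * F u ≤ D * Real.exp (g * (u - a)) := by
    rw [hψ] at hψu
    simp only [hEinv] at hψu
    rw [← div_eq_mul_inv, div_le_iff₀ hEpos] at hψu
    exact hψu
  exact le_trans (prem u hu) h3

/-- Gronwall-type lemma with jumps: if a nonnegative càdlàg function satisfies
`x_s ≤ A + ∑_{k=1}^{J_s} c_k x_{v_k-} + g ∫_0^s x_u du` for `s ≤ t`, then
`sup_{s≤t} x_s ≤ A e^{gt} ∏_{k=1}^{J_t}(1+c_k) ≤ A e^{gt} e^{∑_{k=1}^{J_t} c_k}`. -/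
theorem gronwall_with_jumps
    (v : ℕ → ℝ) (hv0 : v 0 = 0) (hvmono : StrictMono v)
    (hvtop : Tendsto v atTop atTop)
    (J : ℝ → ℕ) (hJ : ∀ s, 0 ≤ s → IsGreatest {k | v k ≤ s} (J s))
    (A g : ℝ) (hA : 0 ≤ A) (hg : 0 ≤ g) (c : ℕ → ℝ) (hc : ∀ k, 0 ≤ c k)
    (t : ℝ) (ht : 0 ≤ t)
    (x : ℝ → ℝ) (hx_nonneg : ∀ s, 0 ≤ s → 0 ≤ x s)
    (hx_rc : ∀ s, 0 ≤ s → ContinuousWithinAt x (Ici s) s)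
    (xL : ℕ → ℝ)
    (hxL : ∀ k, 1 ≤ k → Tendsto x (nhdsWithin (v k) (Iio (v k))) (nhds (xL k)))
    (hInt : ∀ s, IntervalIntegrable x volume 0 s)
    (hineq : ∀ s, 0 ≤ s → s ≤ t →
      x s ≤ A + ∑ k ∈ Finset.Icc 1 (J s), c k * xL k + g * ∫ u in (0:ℝ)..s, x u) :
    (∀ s, 0 ≤ s → s ≤ t →
        x s ≤ A * Real.exp (g * t) * ∏ k ∈ Finset.Icc 1 (J t), (1 + c k)) ∧
      A * Real.exp (g * t) * ∏ k ∈ Finset.Icc 1 (J t), (1 + c k) ≤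
        A * Real.exp (g * t) * Real.exp (∑ k ∈ Finset.Icc 1 (J t), c k) := by
  have hIntAll : ∀ p q, IntervalIntegrable x volume p q := fun p q =>
    (hInt p).symm.trans (hInt q)
  have hvnonneg : ∀ j, 0 ≤ v j := fun j => hv0 ▸ hvmono.monotone (Nat.zero_le j)
  set P : ℕ → ℝ := fun j => ∏ k ∈ Finset.Icc 1 j, (1 + c k) with hP
  set D : ℕ → ℝ := fun j =>
    A + ∑ k ∈ Finset.Icc 1 j, c k * xL k + g * ∫ u in (0:ℝ)..v j, x u with hD
  have hJeq : ∀ (j : ℕ) (u : ℝ), v j ≤ u → u < v (j + 1) → J u = j := by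
    intro j u h1 h2
    have hu0 : 0 ≤ u := le_trans (hvnonneg j) h1
    obtain ⟨hJu, hmax⟩ := hJ u hu0
    have hle : j ≤ J u := hmax h1
    have hlt : v (J u) < v (j + 1) := lt_of_le_of_lt hJu h2
    have := hvmono.lt_iff_lt.1 hlt
    omega
  have hxLnonneg : ∀ k, 1 ≤ k → 0 ≤ xL k := by
    intro k hk
    have hvk : 0 < v k := hv0 ▸ hvmono (by omega)
    refine ge_of_tendsto (hxL k hk) ?_
    filter_upwards [Ioo_mem_nhdsLT_of_mem (⟨hvk, le_refl _⟩ : v k ∈ Ioc 0 (v k))] with u hu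
    exact hx_nonneg u hu.1.le
  have hintnn : ∀ p, 0 ≤ p → 0 ≤ ∫ u in (0:ℝ)..p, x u := fun p hp =>
    intervalIntegral.integral_nonneg hp (fun u hu => hx_nonneg u hu.1)
  have hDnn : ∀ j, 0 ≤ D j := by
    intro j
    refine add_nonneg (add_nonneg hA ?_) (mul_nonneg hg (hintnn _ (hvnonneg j)))
    exact Finset.sum_nonneg fun k hk =>
      mul_nonneg (hc k) (hxLnonneg k (Finset.mem_Icc.1 hk).1)
  have hPnn : ∀ j, 0 ≤ P j := fun j =>
    Finset.prod_nonneg fun k _ => by linarith [hc k]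
  -- Gronwall on each jump-free interval
  have grw : ∀ (j : ℕ) (u : ℝ), v j ≤ u → u ≤ t → u < v (j + 1) →
      x u ≤ D j * Real.exp (g * (u - v j)) := by
    intro j u h1 h2 h3
    refine gronwall_int x hIntAll (v j) u (D j) g hg
      (fun w hw => hx_rc w (le_trans (hvnonneg j) hw)) ?_ u ⟨h1, le_refl u⟩
    intro w hw
    have hw0 : 0 ≤ w := le_trans (hvnonneg j) hw.1
    have hwt : w ≤ t := hw.2.trans h2
    have hJw : J w = j := hJeq j w hw.1 (lt_of_le_of_lt hw.2 h3)
    have h4 := hineq w hw0 hwt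
    rw [hJw] at h4
    have hsplit : (∫ u in (0:ℝ)..w, x u) =
        (∫ u in (0:ℝ)..v j, x u) + ∫ u in (v j)..w, x u :=
      (intervalIntegral.integral_add_adjacent_intervals (hIntAll 0 (v j))
        (hIntAll (v j) w)).symm
    rw [hsplit] at h4
    simp only [hD]
    linarith [h4, mul_add g (∫ u in (0:ℝ)..v j, x u) (∫ u in (v j)..w, x u)]
  -- inductive bound on D
  have keyD : ∀ j : ℕ, v j ≤ t → D j ≤ A * P j * Real.exp (g * v j) := by
    intro j
    induction j with
    | zero =>
      intro _
      have : D 0 = A := by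
        simp [hD, hv0, intervalIntegral.integral_same]
      rw [this, hv0]
      simp [hP]
    | succ j ih =>
      intro hjt1
      have hΔpos : v j < v (j + 1) := hvmono (Nat.lt_succ_self j)
      have hjt : v j ≤ t := le_trans hΔpos.le hjt1
      have ihD := ih hjt
      have hxLb : xL (j + 1) ≤ D j * Real.exp (g * (v (j + 1) - v j)) := by
        refine le_of_tendsto (hxL (j + 1) (by omega)) ?_
        filter_upwards [Ioo_mem_nhdsLT_of_mem
          (⟨hΔpos, le_refl _⟩ : v (j + 1) ∈ Ioc (v j) (v (j + 1)))] with u hu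
        calc x u ≤ D j * Real.exp (g * (u - v j)) :=
              grw j u hu.1.le (le_trans hu.2.le hjt1) hu.2
          _ ≤ D j * Real.exp (g * (v (j + 1) - v j)) := by
              apply mul_le_mul_of_nonneg_left _ (hDnn j)
              apply Real.exp_le_exp.2
              nlinarith [hu.2.le]
      -- integral bound
      have hcontE : Continuous (fun u : ℝ => Real.exp (g * (u - v j))) :=
        Real.continuous_exp.comp (continuous_const.mul (continuous_sub_right (v j)))
      have hbound_int : IntervalIntegrable (fun u => D j * Real.exp (g * (u - v j)))
          volume (v j) (v (j + 1)) :=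
        (Continuous.intervalIntegrable (continuous_const.mul hcontE) _ _)
      have hIb : (∫ u in (v j)..(v (j + 1)), x u) ≤
          ∫ u in (v j)..(v (j + 1)), D j * Real.exp (g * (u - v j)) := by
        refine intervalIntegral.integral_mono_ae_restrict hΔpos.le
          (hIntAll _ _) hbound_int ?_
        have h1 : ∀ᵐ u : ℝ, u ≠ v (j + 1) := by
          rw [ae_iff]
          simp only [ne_eq, not_not]
          rw [show {a : ℝ | a = v (j + 1)} = {v (j + 1)} from Set.setOf_eq_eq_singleton]
          exact measure_singleton _
        filter_upwards [ae_restrict_mem measurableSet_Icc, ae_restrict_of_ae h1]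
          with u hu hne
        have hlt : u < v (j + 1) := lt_of_le_of_ne hu.2 hne
        exact grw j u hu.1 (le_trans hu.2 hjt1) hlt
      have hcalc : (∫ u in (v j)..(v (j + 1)), g * Real.exp (g * (u - v j))) =
          Real.exp (g * (v (j + 1) - v j)) - 1 := by
        have hderiv : ∀ u ∈ uIcc (v j) (v (j + 1)),
            HasDerivAt (fun u => Real.exp (g * (u - v j)))
              (g * Real.exp (g * (u - v j))) u := by
          intro u _
          have hlin : HasDerivAt (fun u : ℝ => g * (u - v j)) g u := by
            simpa using ((hasDerivAt_id u).sub_const (v j)).const_mul g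
          convert hlin.exp using 1
          ring
        have := intervalIntegral.integral_eq_sub_of_hasDerivAt hderiv
          (Continuous.intervalIntegrable (continuous_const.mul hcontE) _ _)
        simpa using this
      have hIb2 : g * (∫ u in (v j)..(v (j + 1)), x u) ≤
          D j * (Real.exp (g * (v (j + 1) - v j)) - 1) := by
        have h2 : (∫ u in (v j)..(v (j + 1)), D j * Real.exp (g * (u - v j))) =
            D j * ∫ u in (v j)..(v (j + 1)), Real.exp (g * (u - v j)) :=
          intervalIntegral.integral_const_mul _ _
        have h3 : (∫ u in (v j)..(v (j + 1)), g * Real.exp (g * (u - v j))) =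
            g * ∫ u in (v j)..(v (j + 1)), Real.exp (g * (u - v j)) :=
          intervalIntegral.integral_const_mul _ _
        have h4 := hcalc
        rw [h3] at h4
        have h5 := mul_le_mul_of_nonneg_left hIb hg
        rw [h2] at h5
        nlinarith [hDnn j]
      -- assemble
      have hDsucc : D (j + 1) = D j + c (j + 1) * xL (j + 1) +
          g * ∫ u in (v j)..(v (j + 1)), x u := by
        simp only [hD]
        rw [Finset.sum_Icc_succ_top (by omega : 1 ≤ j + 1)]
        rw [← intervalIntegral.integral_add_adjacent_intervals (hIntAll 0 (v j))
          (hIntAll (v j) (v (j + 1)))]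
        ring
      have hPsucc : P (j + 1) = P j * (1 + c (j + 1)) := by
        simp only [hP]
        rw [Finset.prod_Icc_succ_top (by omega : 1 ≤ j + 1)]
      have hE : Real.exp (g * v j) * Real.exp (g * (v (j + 1) - v j)) =
          Real.exp (g * v (j + 1)) := by
        rw [← Real.exp_add]; ring_nf
      have step1 : D (j + 1) ≤ D j * Real.exp (g * (v (j + 1) - v j)) * (1 + c (j + 1)) := by
        rw [hDsucc]
        have h6 : c (j + 1) * xL (j + 1) ≤
            c (j + 1) * (D j * Real.exp (g * (v (j + 1) - v j))) :=
          mul_le_mul_of_nonneg_left hxLb (hc (j + 1))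
        nlinarith []
      have step2 : D j * Real.exp (g * (v (j + 1) - v j)) * (1 + c (j + 1)) ≤
          A * P (j + 1) * Real.exp (g * v (j + 1)) := by
        rw [hPsucc, ← hE]
        have h7 : (0:ℝ) ≤ 1 + c (j + 1) := by linarith [hc (j + 1)]
        have h8 := mul_le_mul_of_nonneg_right
          (mul_le_mul_of_nonneg_right ihD (Real.exp_pos (g * (v (j + 1) - v j))).le) h7
        nlinarith [h8]
      linarith
  refine ⟨?_, ?_⟩
  · intro s hs0 hst
    obtain ⟨hvj, hmax⟩ := hJ s hs0
    have hjlt : s < v (J s + 1) := by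
      by_contra h
      push_neg at h
      have := hmax h
      omega
    have h1 := grw (J s) s hvj hst hjlt
    have h2 := keyD (J s) (hvj.trans hst)
    have hjJt : J s ≤ J t := (hJ t ht).2 (hvj.trans hst)
    have hPmono : Monotone P := by
      refine monotone_nat_of_le_succ (fun n => ?_)
      have : P (n + 1) = P n * (1 + c (n + 1)) := by
        simp only [hP]
        rw [Finset.prod_Icc_succ_top (by omega : 1 ≤ n + 1)]
      rw [this]
      exact le_mul_of_one_le_right (hPnn n) (by linarith [hc (n + 1)])
    have hPle : P (J s) ≤ P (J t) := hPmono hjJt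
    calc x s ≤ D (J s) * Real.exp (g * (s - v (J s))) := h1
      _ ≤ A * P (J s) * Real.exp (g * v (J s)) * Real.exp (g * (s - v (J s))) :=
          mul_le_mul_of_nonneg_right h2 (Real.exp_pos _).le
      _ = A * P (J s) * Real.exp (g * s) := by
          rw [mul_assoc, ← Real.exp_add]; ring_nf
      _ ≤ A * Real.exp (g * t) * P (J t) := by
          have hs_le : Real.exp (g * s) ≤ Real.exp (g * t) :=
            Real.exp_le_exp.2 (mul_le_mul_of_nonneg_left hst hg)
          have := mul_le_mul hPle hs_le (Real.exp_pos _).le (hPnn (J t))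
          nlinarith [this, hA]
  · have h1 : P (J t) ≤ Real.exp (∑ k ∈ Finset.Icc 1 (J t), c k) := by
      rw [Real.exp_sum]
      refine Finset.prod_le_prod (fun k _ => by linarith [hc k]) ?_
      intro k _
      linarith [Real.add_one_le_exp (c k)]
    exact mul_le_mul_of_nonneg_left h1 (mul_nonneg hA (Real.exp_pos _).le)
end

section
/- Let $\mu=\sum_{k\geq1}k^{-\lambda}\delta_{1/k}$ on $(0,1]$ with $0<\lambda\leq1$. Then $\int_{\{a\leq u\}}a^2\,d\mu(a)=\sum_{k\geq1/u}k^{-(2+\lambda)}$ and $\lim_{u\to0^+}\frac{1}{u^{1+\lambda}}\int_{\{a\leq u\}}a^2\,d\mu(a)=\frac{1}{1+\lambda}$. Consequently, the Ishikawa–Kunita condition $\liminf_{u\to0}u^{-h}\int_{\{|a|\leq u\}}a^2\,d\mu(a)>0$ holds for $h=1+\lambda$ when $\lambda<1$ (so $h<2$), but fails for every $h<2$ when $\lambda=1$. -/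
open MeasureTheory Set Filter
open scoped ENNReal

/-- The measure `μ_λ = ∑_{k≥1} k^{-λ} δ_{1/k}` on `(0,1]`. -/
noncomputable def muLam (lam : ℝ) : Measure ℝ :=
  Measure.sum fun k : ℕ =>
    ENNReal.ofReal (((k : ℝ) + 1) ^ (-lam)) • Measure.dirac (1 / ((k : ℝ) + 1))

section Aux
open Real
open Real

lemma bern_neg {p s : ℝ} (hp : 1 ≤ p) (hs : -1 < s) : 1 - p * s ≤ (1 + s) ^ (-p) := by
  have h1 : (0:ℝ) < 1 + s := by linarith
  set t : ℝ := -s / (1 + s) with ht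
  have h2 : 1 + t = (1 + s)⁻¹ := by rw [ht]; field_simp; ring
  have h3 : (-1:ℝ) ≤ t := by
    have h5 : (0:ℝ) < (1+s)⁻¹ := by positivity
    nlinarith [h5, h2]
  have key := one_add_mul_self_le_rpow_one_add h3 hp
  rw [h2, Real.inv_rpow h1.le, ← Real.rpow_neg h1.le] at key
  have h4 : 0 ≤ t + s := by
    have h6 : (t + s) * (1 + s) = s ^ 2 := by rw [ht]; field_simp; ring
    nlinarith [sq_nonneg s]
  nlinarith [mul_nonneg (le_trans zero_le_one hp) h4]

lemma tele_low {p n : ℝ} (hp : 1 ≤ p) (hn : 1 ≤ n) :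
    n ^ (-p) - (n + 1) ^ (-p) ≤ p * n ^ (-(p + 1)) := by
  have hn0 : (0:ℝ) < n := by linarith
  have hsplit : (n + 1 : ℝ) ^ (-p) = n ^ (-p) * (1 + 1/n) ^ (-p) := by
    rw [← Real.mul_rpow hn0.le (by positivity)]
    congr 1
    field_simp
  have hb : 1 - p * (1/n) ≤ (1 + 1/n) ^ (-p) := by
    apply bern_neg hp
    have h9 : (0:ℝ) < 1/n := by positivity
    linarith
  have hnp : (0:ℝ) < n ^ (-p) := Real.rpow_pos_of_pos hn0 _
  have hx : n ^ (-(p+1)) = n ^ (-p) * n⁻¹ := by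
    rw [← Real.rpow_neg_one n, ← Real.rpow_add hn0]; ring_nf
  rw [hsplit, hx]
  have := mul_le_mul_of_nonneg_left hb hnp.le
  have h7 : n ^ (-p) * (1 - p * (1/n)) = n ^ (-p) - p * (n ^ (-p) * n⁻¹) := by
    field_simp
  nlinarith [this]

lemma tele_up {p n : ℝ} (hp : 1 ≤ p) (hn : 1 ≤ n) :
    p * (n + 1) ^ (-(p + 1)) ≤ n ^ (-p) - (n + 1) ^ (-p) := by
  have hn0 : (0:ℝ) < n := by linarith
  have hm0 : (0:ℝ) < n + 1 := by linarith
  have hsplit : n ^ (-p) = (n + 1) ^ (-p) * (1 + (-1/(n+1))) ^ (-p) := by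
    rw [← Real.mul_rpow hm0.le (by rw [show 1 + (-1/(n+1)) = n/(n+1) by field_simp; ring]; positivity)]
    congr 1
    field_simp; ring
  have hb : 1 - p * (-1/(n+1)) ≤ (1 + (-1/(n+1))) ^ (-p) := by
    apply bern_neg hp
    rw [neg_lt, neg_div, neg_neg]
    rw [div_lt_one hm0]; linarith
  have hnp : (0:ℝ) < (n+1) ^ (-p) := Real.rpow_pos_of_pos hm0 _
  have hx : (n+1) ^ (-(p+1)) = (n+1) ^ (-p) * (n+1)⁻¹ := by
    rw [← Real.rpow_neg_one (n+1), ← Real.rpow_add hm0]; ring_nf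
  rw [hsplit, hx]
  have := mul_le_mul_of_nonneg_left hb hnp.le
  have h7 : (n+1) ^ (-p) * (1 - p * (-1/(n+1))) = (n+1) ^ (-p) + p * ((n+1) ^ (-p) * (n+1)⁻¹) := by
    field_simp; ring
  nlinarith [this]

noncomputable def gfun (q : ℝ) (k : ℕ) : ℝ := ((k:ℝ) + 1) ^ (-q)

lemma gfun_pos (q : ℝ) (k : ℕ) : 0 < gfun q k :=
  Real.rpow_pos_of_pos (by positivity) _

lemma gfun_anti (q : ℝ) (hq : 0 ≤ q) {k l : ℕ} (hkl : k ≤ l) : gfun q l ≤ gfun q k := by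
  apply Real.rpow_le_rpow_of_nonpos (by positivity) _ (by linarith)
  have : (k:ℝ) ≤ l := Nat.cast_le.2 hkl
  linarith

lemma gfun_summable {q : ℝ} (hq : 1 < q) : Summable (gfun q) := by
  have h1 : Summable (fun n : ℕ => (n : ℝ) ^ (-q)) :=
    Real.summable_nat_rpow.2 (by linarith)
  have h2 := (summable_nat_add_iff 1).2 h1
  apply h2.congr
  intro k
  simp [gfun]

lemma hasSum_tele {p : ℝ} (hp : 0 < p) (M : ℕ) :
    HasSum (fun j => gfun p (M + j) - gfun p (M + j + 1)) (gfun p M) := by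
  rw [hasSum_iff_tendsto_nat_of_nonneg
    (fun j => sub_nonneg.2 (gfun_anti p hp.le (Nat.le_succ _)))]
  have hsum : ∀ n, ∑ j ∈ Finset.range n, (gfun p (M + j) - gfun p (M + j + 1)) =
      gfun p M - gfun p (M + n) := by
    intro n
    have := Finset.sum_range_sub' (f := fun j => gfun p (M + j)) n
    simpa [Nat.add_assoc] using this
  simp only [hsum]
  have h0 : Filter.Tendsto (fun n : ℕ => gfun p (M + n)) Filter.atTop (nhds 0) := by
    have h1 : Filter.Tendsto (fun n : ℕ => ((M + n : ℕ) : ℝ) + 1) Filter.atTop Filter.atTop :=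
      Filter.tendsto_atTop_mono (fun n => by push_cast; linarith [Nat.cast_nonneg (α := ℝ) M])
        tendsto_natCast_atTop_atTop
    exact (tendsto_rpow_neg_atTop hp).comp h1
  simpa using Filter.Tendsto.sub tendsto_const_nhds h0

lemma tail_summable {p : ℝ} (hp : 1 ≤ p) (M : ℕ) :
    Summable (fun j => gfun (p + 1) (M + j)) := by
  have := (gfun_summable (q := p + 1) (by linarith)).comp_injective
    (add_right_injective M)
  exact this

lemma tail_lower {p : ℝ} (hp : 1 ≤ p) (M : ℕ) :
    gfun p M ≤ p * ∑' j, gfun (p + 1) (M + j) := by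
  have hp0 : (0:ℝ) < p := by linarith
  have h1 : ∀ j : ℕ, gfun p (M + j) - gfun p (M + j + 1) ≤ p * gfun (p + 1) (M + j) := by
    intro j
    have := tele_low (p := p) (n := ((M + j : ℕ) : ℝ) + 1) hp (by have := Nat.cast_nonneg (α := ℝ) (M + j); linarith)
    have hcast : ((M + j : ℕ) : ℝ) + 1 + 1 = ((M + j + 1 : ℕ) : ℝ) + 1 := by push_cast; ring
    rw [hcast] at this
    simpa [gfun] using this
  calc gfun p M = ∑' j, (gfun p (M + j) - gfun p (M + j + 1)) := (hasSum_tele hp0 M).tsum_eq.symm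
    _ ≤ ∑' j, p * gfun (p + 1) (M + j) :=
        Summable.tsum_le_tsum h1 (hasSum_tele hp0 M).summable ((tail_summable hp M).mul_left p)
    _ = p * ∑' j, gfun (p + 1) (M + j) := tsum_mul_left

lemma tail_upper {p : ℝ} (hp : 1 ≤ p) (M : ℕ) :
    p * ∑' j, gfun (p + 1) (M + j) ≤ p * gfun (p + 1) M + gfun p M := by
  have hp0 : (0:ℝ) < p := by linarith
  have hsumm := tail_summable hp M
  have hsplit : ∑' j, gfun (p + 1) (M + j) =
      gfun (p + 1) M + ∑' j, gfun (p + 1) (M + j + 1) := by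
    have := Summable.tsum_eq_zero_add hsumm
    simpa [Nat.add_assoc] using this
  have h2 : ∀ j : ℕ, p * gfun (p + 1) (M + j + 1) ≤ gfun p (M + j) - gfun p (M + j + 1) := by
    intro j
    have := tele_up (p := p) (n := ((M + j : ℕ) : ℝ) + 1) hp (by have := Nat.cast_nonneg (α := ℝ) (M + j); linarith)
    have hcast : ((M + j : ℕ) : ℝ) + 1 + 1 = ((M + j + 1 : ℕ) : ℝ) + 1 := by push_cast; ring
    rw [hcast] at this
    simpa [gfun] using this
  have hsum2 : Summable (fun j => gfun (p + 1) (M + j + 1)) := by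
    have := hsumm.comp_injective (add_right_injective 1)
    apply this.congr
    intro j
    simp [Nat.add_comm 1 j, Nat.add_assoc]
  have h3 : p * ∑' j, gfun (p + 1) (M + j + 1) ≤ gfun p M := by
    calc p * ∑' j, gfun (p + 1) (M + j + 1) = ∑' j, p * gfun (p + 1) (M + j + 1) := tsum_mul_left.symm
      _ ≤ ∑' j, (gfun p (M + j) - gfun p (M + j + 1)) :=
          Summable.tsum_le_tsum h2 (hsum2.mul_left p) (hasSum_tele hp0 M).summable
      _ = gfun p M := (hasSum_tele hp0 M).tsum_eq
  rw [hsplit, mul_add]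
  linarith

noncomputable def Sfun (lam u : ℝ) : ℝ :=
  ∑' k : ℕ, if 1 / u ≤ (k : ℝ) + 1 then ((k : ℝ) + 1) ^ (-(2 + lam)) else 0

lemma lint_eq (lam : ℝ) {u : ℝ} (hu : 0 < u) (S : Set ℝ) (hS : MeasurableSet S)
    (hSu : ∀ k : ℕ, (1 / ((k:ℝ) + 1) ∈ S ↔ 1 / ((k:ℝ) + 1) ≤ u)) :
    (∫⁻ a in S, ENNReal.ofReal (a ^ 2) ∂(muLam lam)).toReal = Sfun lam u := by
  classical
  have hcond : ∀ k : ℕ, (1 / ((k:ℝ) + 1) ≤ u ↔ 1 / u ≤ (k:ℝ) + 1) := by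
    intro k
    have hk1 : (0:ℝ) < (k:ℝ) + 1 := by positivity
    rw [div_le_iff₀ hk1, div_le_iff₀ hu, mul_comm]
  have key : (∫⁻ a in S, ENNReal.ofReal (a ^ 2) ∂(muLam lam)) =
      ∑' k : ℕ, ENNReal.ofReal
        (if 1 / u ≤ (k : ℝ) + 1 then ((k : ℝ) + 1) ^ (-(2 + lam)) else 0) := by
    rw [muLam, Measure.restrict_sum _ hS, lintegral_sum_measure]
    apply tsum_congr
    intro k
    have hk1 : (0:ℝ) < (k:ℝ) + 1 := by positivity
    rw [Measure.restrict_smul, lintegral_smul_measure, MeasureTheory.restrict_dirac' hS]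
    by_cases hk : 1 / ((k:ℝ) + 1) ∈ S
    · rw [if_pos hk, lintegral_dirac, if_pos (((hcond k).1 ((hSu k).1 hk)))]
      rw [smul_eq_mul, ← ENNReal.ofReal_mul (Real.rpow_nonneg hk1.le _)]
      congr 1
      rw [one_div, inv_pow, ← Real.rpow_natCast ((k:ℝ) + 1) 2, ← Real.rpow_neg hk1.le,
        ← Real.rpow_add hk1]
      norm_num
    · rw [if_neg hk, if_neg (fun hc => hk ((hSu k).2 ((hcond k).2 hc)))]
      simp
  rw [key, ENNReal.tsum_toReal_eq (fun k => ENNReal.ofReal_ne_top), Sfun]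
  apply tsum_congr
  intro k
  apply ENNReal.toReal_ofReal
  split_ifs
  · exact Real.rpow_nonneg (by positivity) _
  · exact le_refl 0

lemma Sfun_eq_tail (lam : ℝ) (h0 : 0 < lam) {u : ℝ} (hu : 0 < u) :
    Sfun lam u = ∑' j, gfun (2 + lam) ((⌈1/u⌉₊ - 1) + j) := by
  classical
  set N := ⌈1/u⌉₊ with hN
  have hN1 : 1 ≤ N := Nat.ceil_pos.2 (by positivity)
  set M := N - 1 with hM
  have hMN : M + 1 = N := Nat.succ_pred_eq_of_pos hN1
  have hiff : ∀ k : ℕ, (1/u ≤ (k:ℝ) + 1 ↔ M ≤ k) := by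
    intro k
    rw [show ((k:ℝ) + 1) = ((k + 1 : ℕ) : ℝ) by push_cast; ring, ← Nat.ceil_le, ← hN]
    omega
  have h1 : Sfun lam u = ∑' k : ℕ, (if M ≤ k then gfun (2 + lam) k else 0) := by
    rw [Sfun]
    apply tsum_congr
    intro k
    rw [if_congr (hiff k) rfl rfl]
    rfl
  have hf : Summable (fun k => if M ≤ k then gfun (2 + lam) k else 0) := by
    apply Summable.of_nonneg_of_le _ _ (gfun_summable (q := 2 + lam) (by linarith))
    · intro k; split_ifs; exacts [(gfun_pos _ k).le, le_refl 0]
    · intro k; split_ifs; exacts [le_refl _, (gfun_pos _ k).le]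
  rw [h1, ← Summable.sum_add_tsum_nat_add M hf]
  have hz : ∑ i ∈ Finset.range M, (if M ≤ i then gfun (2 + lam) i else 0) = 0 := by
    apply Finset.sum_eq_zero
    intro i hi
    rw [if_neg]
    exact Nat.not_le.2 (Finset.mem_range.1 hi)
  rw [hz, zero_add]
  apply tsum_congr
  intro j
  rw [if_pos (by omega), Nat.add_comm]

lemma ratio_bound (lam : ℝ) (h0 : 0 < lam) {u : ℝ} (hu : 0 < u) :
    (1+u) ^ (-(1+lam)) / (1+lam) ≤ (1 / u ^ (1+lam)) * Sfun lam u ∧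
      (1 / u ^ (1+lam)) * Sfun lam u ≤ u + 1 / (1+lam) := by
  set p := 1 + lam with hp
  have hp1 : 1 ≤ p := by rw [hp]; linarith
  have hp0 : (0:ℝ) < p := by linarith
  set N := ⌈1/u⌉₊ with hN
  have hN1 : 1 ≤ N := Nat.ceil_pos.2 (by positivity)
  set M := N - 1 with hM
  have hMN : M + 1 = N := Nat.succ_pred_eq_of_pos hN1
  have hMcast : ((M:ℕ):ℝ) + 1 = (N:ℝ) := by exact_mod_cast congrArg (Nat.cast (R := ℝ)) hMN
  set T := ∑' j, gfun (p + 1) (M + j) with hT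
  have hTail : Sfun lam u = T := by
    rw [Sfun_eq_tail lam h0 hu, hT]
    congr 1
    funext j
    congr 1
    rw [hp]; ring
  have hNl : 1/u ≤ (N:ℝ) := Nat.le_ceil _
  have hNu : (N:ℝ) < 1/u + 1 := Nat.ceil_lt_add_one (by positivity)
  have hup : (0:ℝ) < u ^ p := Real.rpow_pos_of_pos hu _
  have hinv : (1/u) ^ (-p) = u ^ p := by
    rw [one_div, Real.inv_rpow hu.le, Real.rpow_neg hu.le, inv_inv]
  have hinv1 : (1/u) ^ (-(p+1)) = u ^ (p+1) := by
    rw [one_div, Real.inv_rpow hu.le, Real.rpow_neg hu.le, inv_inv]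
  have b1 : gfun p M ≤ u ^ p := by
    have h := Real.rpow_le_rpow_of_nonpos (x := 1/u) (y := ((M:ℕ):ℝ) + 1) (by positivity)
      (by rw [hMcast]; exact hNl) (by linarith : -p ≤ 0)
    rw [hinv] at h
    exact h
  have b2 : gfun (p+1) M ≤ u ^ (p+1) := by
    have h := Real.rpow_le_rpow_of_nonpos (x := 1/u) (y := ((M:ℕ):ℝ) + 1) (by positivity)
      (by rw [hMcast]; exact hNl) (by linarith : -(p+1) ≤ 0)
    rw [hinv1] at h
    exact h
  have b3 : u ^ p * (1+u) ^ (-p) ≤ gfun p M := by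
    have hdiv : ((1+u)/u) ^ (-p) = (1+u) ^ (-p) * u ^ p := by
      rw [Real.div_rpow (by linarith) hu.le, div_eq_mul_inv, Real.rpow_neg hu.le, inv_inv]
    have h := Real.rpow_le_rpow_of_nonpos (x := ((M:ℕ):ℝ) + 1) (y := (1+u)/u) (by positivity)
      (by rw [hMcast]; rw [show (1+u)/u = 1/u + 1 by field_simp]; linarith) (by linarith : -p ≤ 0)
    rw [hdiv] at h
    calc u ^ p * (1+u) ^ (-p) = (1+u) ^ (-p) * u ^ p := by ring
      _ ≤ gfun p M := h
  have hTl : gfun p M ≤ p * T := tail_lower hp1 M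
  have hTu : p * T ≤ p * gfun (p+1) M + gfun p M := tail_upper hp1 M
  have heq : u ^ (p+1) = u ^ p * u := by
    rw [Real.rpow_add hu, Real.rpow_one]
  rw [hTail]
  constructor
  · have h : u ^ p * (1+u) ^ (-p) ≤ p * T := le_trans b3 hTl
    rw [div_le_iff₀ hp0, one_div, ← div_eq_inv_mul, div_mul_eq_mul_div, le_div_iff₀ hup]
    nlinarith [h]
  · have h : p * T ≤ p * (u ^ p * u) + u ^ p := by
      have := mul_le_mul_of_nonneg_left b2 hp0.le
      rw [heq] at this
      linarith
    rw [one_div, ← div_eq_inv_mul, div_le_iff₀ hup]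
    have hexp : (u + 1/p) * u ^ p * p = p * (u ^ p * u) + u ^ p := by
      field_simp
    have h10 : p * T ≤ p * ((u + 1/p) * u ^ p) := by nlinarith [hexp, h]
    exact le_of_mul_le_mul_left h10 hp0

lemma Sfun_tendsto (lam : ℝ) (h0 : 0 < lam) :
    Tendsto (fun u : ℝ => (1 / u ^ (1+lam)) * Sfun lam u)
      (nhdsWithin 0 (Ioi 0)) (nhds (1 / (1+lam))) := by
  have hp0 : (0:ℝ) < 1 + lam := by linarith
  apply tendsto_of_tendsto_of_tendsto_of_le_of_le'
    (g := fun u : ℝ => (1+u) ^ (-(1+lam)) / (1+lam))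
    (h := fun u : ℝ => u + 1 / (1+lam))
  · have c1 : Tendsto (fun u : ℝ => 1 + u) (nhds 0) (nhds 1) := by
      simpa using (continuous_add_left (1:ℝ)).tendsto (0:ℝ)
    have c2 : Tendsto (fun x : ℝ => x ^ (-(1+lam))) (nhds 1) (nhds ((1:ℝ) ^ (-(1+lam)))) :=
      (Real.continuousAt_rpow_const 1 _ (Or.inl one_ne_zero)).tendsto
    have c3 := ((c2.comp c1).div_const (1+lam)).mono_left
      (nhdsWithin_le_nhds (s := Ioi (0:ℝ)))
    simpa [Real.one_rpow] using c3
  · have : Tendsto (fun u : ℝ => u + 1 / (1+lam)) (nhds 0) (nhds (0 + 1 / (1+lam))) :=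
      (tendsto_id (α := ℝ)).add tendsto_const_nhds
    rw [zero_add] at this
    exact this.mono_left nhdsWithin_le_nhds
  · filter_upwards [self_mem_nhdsWithin] with u hu using (ratio_bound lam h0 hu).1
  · filter_upwards [self_mem_nhdsWithin] with u hu using (ratio_bound lam h0 hu).2

end Aux

/-- Example 2 of the paper: for `μ = ∑_k k^{-λ} δ_{1/k}`, `0 < λ ≤ 1`, the truncated
second moment `∫_{a≤u} a² dμ` equals `∑_{k ≥ 1/u} k^{-(2+λ)}`, satisfies
`u^{-(1+λ)} ∫_{a≤u} a² dμ → 1/(1+λ)` as `u → 0⁺`, so the Ishikawa–Kunita condition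
`liminf_{u→0} u^{-h} ∫_{|a|≤u} a² dμ > 0` holds with `h = 1+λ < 2` when `λ < 1`,
but fails for every `h < 2` when `λ = 1`. -/
theorem ishikawa_kunita_example (lam : ℝ) (h0 : 0 < lam) (h1 : lam ≤ 1) :
    (∀ u : ℝ, 0 < u → u ≤ 1 →
        (∫⁻ a in {a : ℝ | a ≤ u}, ENNReal.ofReal (a ^ 2) ∂(muLam lam)).toReal =
          ∑' k : ℕ, if 1 / u ≤ (k : ℝ) + 1 then ((k : ℝ) + 1) ^ (-(2 + lam)) else 0) ∧
      Tendsto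
        (fun u : ℝ => (1 / u ^ (1 + lam)) *
          (∫⁻ a in {a : ℝ | a ≤ u}, ENNReal.ofReal (a ^ 2) ∂(muLam lam)).toReal)
        (nhdsWithin 0 (Ioi 0)) (nhds (1 / (1 + lam))) ∧
      (lam < 1 →
        0 < liminf
          (fun u : ℝ => u ^ (-(1 + lam)) *
            (∫⁻ a in {a : ℝ | |a| ≤ u}, ENNReal.ofReal (a ^ 2) ∂(muLam lam)).toReal)
          (nhdsWithin 0 (Ioi 0))) ∧
      (lam = 1 → ∀ h : ℝ, h < 2 →
        ¬ 0 < liminf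
          (fun u : ℝ => u ^ (-h) *
            (∫⁻ a in {a : ℝ | |a| ≤ u}, ENNReal.ofReal (a ^ 2) ∂(muLam lam)).toReal)
          (nhdsWithin 0 (Ioi 0))) := by
  have hset1 : ∀ u : ℝ, 0 < u →
      (∫⁻ a in {a : ℝ | a ≤ u}, ENNReal.ofReal (a ^ 2) ∂(muLam lam)).toReal = Sfun lam u := by
    intro u hu
    exact lint_eq lam hu _ (measurableSet_Iic) (fun k => Iff.rfl)
  have hset2 : ∀ u : ℝ, 0 < u →
      (∫⁻ a in {a : ℝ | |a| ≤ u}, ENNReal.ofReal (a ^ 2) ∂(muLam lam)).toReal = Sfun lam u := by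
    intro u hu
    apply lint_eq lam hu _ (measurableSet_le (measurable_id.abs) measurable_const)
    intro k
    have hk1 : (0:ℝ) < 1 / ((k:ℝ) + 1) := by positivity
    show |1 / ((k:ℝ) + 1)| ≤ u ↔ _
    rw [abs_of_pos hk1]
  have htend2 : Tendsto
      (fun u : ℝ => (1 / u ^ (1 + lam)) *
        (∫⁻ a in {a : ℝ | a ≤ u}, ENNReal.ofReal (a ^ 2) ∂(muLam lam)).toReal)
      (nhdsWithin 0 (Ioi 0)) (nhds (1 / (1 + lam))) := by
    apply (Sfun_tendsto lam h0).congr'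
    filter_upwards [self_mem_nhdsWithin] with u hu
    rw [hset1 u hu]
  have htend3 : Tendsto
      (fun u : ℝ => u ^ (-(1 + lam)) *
        (∫⁻ a in {a : ℝ | |a| ≤ u}, ENNReal.ofReal (a ^ 2) ∂(muLam lam)).toReal)
      (nhdsWithin 0 (Ioi 0)) (nhds (1 / (1 + lam))) := by
    apply (Sfun_tendsto lam h0).congr'
    filter_upwards [self_mem_nhdsWithin] with u hu
    rw [hset2 u hu, Real.rpow_neg (le_of_lt hu), one_div]
  refine ⟨fun u hu _ => hset1 u hu, htend2, ?_, ?_⟩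
  · intro _
    rw [htend3.liminf_eq]
    exact div_pos zero_lt_one (by linarith)
  · intro hlam h hh
    subst hlam
    have htend4 : Tendsto
        (fun u : ℝ => u ^ (-h) *
          (∫⁻ a in {a : ℝ | |a| ≤ u}, ENNReal.ofReal (a ^ 2) ∂(muLam 1)).toReal)
        (nhdsWithin 0 (Ioi 0)) (nhds 0) := by
      have h2 : Tendsto (fun u : ℝ => u ^ (2 - h)) (nhdsWithin (0:ℝ) (Ioi 0)) (nhds 0) := by
        have c := (Real.continuousAt_rpow_const 0 (2 - h) (Or.inr (by linarith))).tendsto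
        have c2 := c.mono_left (nhdsWithin_le_nhds (s := Ioi (0:ℝ)))
        simpa [Real.zero_rpow (ne_of_gt (by linarith : (0:ℝ) < 2 - h))] using c2
      have hprod := h2.mul htend3
      rw [zero_mul] at hprod
      apply hprod.congr'
      filter_upwards [self_mem_nhdsWithin] with u hu
      have hu0 : (0:ℝ) < u := hu
      have hrw : u ^ (2 - h) * u ^ (-(1 + 1 : ℝ)) = u ^ (-h) := by
        rw [← Real.rpow_add hu0]
        congr 1
        ring
      calc u ^ (2 - h) * (u ^ (-(1 + 1 : ℝ)) *
            (∫⁻ a in {a : ℝ | |a| ≤ u}, ENNReal.ofReal (a ^ 2) ∂(muLam 1)).toReal)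
          = (u ^ (2 - h) * u ^ (-(1 + 1 : ℝ))) *
            (∫⁻ a in {a : ℝ | |a| ≤ u}, ENNReal.ofReal (a ^ 2) ∂(muLam 1)).toReal := by ring
        _ = _ := by rw [hrw]
    rw [htend4.liminf_eq]
    exact lt_irrefl 0
end
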